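/- Let d, m, k ∈ ℕ and let p_0, …, p_m, q_0, …, q_k : ℝ^d → ℝ be polynomial functions. For θ ∈ ℝ^d define P_θ(λ) = Σ_{u=0}^m p_u(θ) λ^u and Q_θ(λ) = Σ_{u=0}^k q_u(θ) λ^u. Suppose there exists θ₀ ∈ ℝ^d with p_m(θ₀) ≠ 0, q_k(θ₀) ≠ 0, and such that P_{θ₀} and Q_{θ₀} have no common complex root. Then the set {θ ∈ ℝ^d : p_m(θ) ≠ 0, q_k(θ) ≠ 0, and there exists z ∈ ℂ with P_θ(z) = 0 and Q_θ(z) = 0} has Lebesgue measure zero in ℝ^d. -/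
import Mathlib


open Finset MeasureTheory MvPolynomial

lemma nullOfPolyZero : ∀ (d : ℕ) (f : MvPolynomial (Fin d) ℝ), f ≠ 0 →
    volume {θ : Fin d → ℝ | eval θ f = 0} = 0 := by
  intro d
  induction d with
  | zero =>
    intro f hf
    obtain ⟨c, rfl⟩ := MvPolynomial.C_surjective (Fin 0) f
    have hc : c ≠ 0 := fun h => hf (by rw [h, map_zero])
    have : {θ : Fin 0 → ℝ | eval θ (C c) = 0} = ∅ := by
      ext θ; simp [hc]
    rw [this, measure_empty]
  | succ n ih =>
    intro f hf
    set g := finSuccEquiv ℝ n f with hgdef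
    have hg : g ≠ 0 := by
      intro h
      exact hf ((map_eq_zero_iff _ (AlgEquiv.injective _)).mp h)
    have hlc : g.leadingCoeff ≠ 0 := Polynomial.leadingCoeff_ne_zero.mpr hg
    -- the product-space set
    set B : Set ((Fin n → ℝ) × ℝ) :=
      {x | eval (Fin.cons x.2 x.1) f = 0} with hBdef
    have hBmeas : MeasurableSet B := by
      have hcont : Continuous fun x : (Fin n → ℝ) × ℝ => eval (Fin.cons x.2 x.1) f := by
        have hcons : Continuous fun x : (Fin n → ℝ) × ℝ => (Fin.cons x.2 x.1 : Fin (n+1) → ℝ) := by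
          apply continuous_pi
          intro i
          refine Fin.cases ?_ ?_ i
          · exact continuous_snd
          · intro j; exact (continuous_apply j).comp continuous_fst
        exact (MvPolynomial.continuous_eval f).comp hcons
      exact hcont.measurable (measurableSet_singleton 0)
    set A : Set (ℝ × (Fin n → ℝ)) := Prod.swap ⁻¹' B with hAdef
    have hAmeas : MeasurableSet A := hBmeas.preimage measurable_swap
    have hψ := volume_preserving_piFinSuccAbove (fun _ : Fin (n + 1) => ℝ) 0
    have hpre : (MeasurableEquiv.piFinSuccAbove (fun _ : Fin (n + 1) => ℝ) 0) ⁻¹' A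
        = {θ : Fin (n + 1) → ℝ | eval θ f = 0} := by
      ext θ
      simp only [Set.mem_preimage, MeasurableEquiv.piFinSuccAbove_apply, hAdef, hBdef,
        Set.mem_setOf_eq, Prod.swap]
      constructor
      · intro h
        have := Fin.cons_self_tail θ
        simpa [Fin.tail, Fin.succAbove] using h
      · intro h
        simpa [Fin.tail, Fin.succAbove, Fin.cons_self_tail] using h
    rw [← hpre, hψ.measure_preimage hAmeas.nullMeasurableSet]
    have hswap : (volume : Measure (ℝ × (Fin n → ℝ))) A
        = (volume : Measure ((Fin n → ℝ) × ℝ)) B := by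
      have := (Measure.measurePreserving_swap (μ := (volume : Measure ℝ))
        (ν := (volume : Measure (Fin n → ℝ)))).measure_preimage hBmeas.nullMeasurableSet
      simpa [hAdef, ← Measure.volume_eq_prod] using this
    rw [hswap, Measure.volume_eq_prod, Measure.measure_prod_null hBmeas]
    simp only [Filter.EventuallyEq, Pi.zero_apply]
    have hae : ∀ᵐ θ' : Fin n → ℝ, eval θ' g.leadingCoeff ≠ 0 := by
      rw [ae_iff]
      simpa [not_not] using ih g.leadingCoeff hlc
    filter_upwards [hae] with θ' hθ'
    have hmapne : g.map (eval θ') ≠ 0 := by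
      intro h0
      apply hθ'
      have h1 := congrArg (fun P => Polynomial.coeff P g.natDegree) h0
      simp only [Polynomial.coeff_map, Polynomial.coeff_zero] at h1
      rw [Polynomial.leadingCoeff]
      exact h1
    have hfin : Set.Finite {x : ℝ | Polynomial.eval x (g.map (eval θ')) = 0} :=
      Polynomial.finite_setOf_isRoot hmapne
    refine measure_mono_null ?_ (hfin.measure_zero volume)
    intro x hx
    simp only [Set.mem_preimage, hBdef, Set.mem_setOf_eq] at hx ⊢
    rw [eval_eq_eval_mv_eval'] at hx
    exact hx

open Finset Polynomial

section Syl
variable {R : Type*} [CommRing R]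

/-- Entry of the Sylvester matrix. -/
def sylE (m k : ℕ) (a b : ℕ → R) : ℕ → ℕ → R := fun i j =>
  if i < k then (if i ≤ j ∧ j ≤ i + m then a (j - i) else 0)
  else (if i - k ≤ j ∧ j ≤ i - k + k then b (j - (i - k)) else 0)

/-- Sylvester matrix. -/
def sylM (m k : ℕ) (a b : ℕ → R) : Matrix (Fin (m + k)) (Fin (m + k)) R :=
  Matrix.of fun i j => sylE m k a b (i : ℕ) (j : ℕ)

lemma sylM_apply (m k : ℕ) (a b : ℕ → R) (i j : Fin (m + k)) :
    sylM m k a b i j = sylE m k a b (i : ℕ) (j : ℕ) := rfl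

lemma sylE_eq_zero_of_ge (m k : ℕ) (a b : ℕ → R) {i j : ℕ} (hi : i < m + k)
    (hj : m + k ≤ j) : sylE m k a b i j = 0 := by
  unfold sylE
  split_ifs with h1 h2 h3 <;> first | rfl | omega

lemma sylM_mulVec (m k : ℕ) (a b : ℕ → R) (z : R) (i : Fin (m + k)) :
    (sylM m k a b).mulVec (fun j => z ^ (j : ℕ)) i =
      if (i : ℕ) < k then z ^ (i : ℕ) * ∑ u ∈ range (m + 1), a u * z ^ u
      else z ^ ((i : ℕ) - k) * ∑ u ∈ range (k + 1), b u * z ^ u := by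
  have hi : (i : ℕ) < m + k := i.isLt
  rw [Matrix.mulVec, dotProduct]
  simp only [sylM_apply]
  rw [Fin.sum_univ_eq_sum_range (fun j => sylE m k a b (i : ℕ) j * z ^ j)]
  split_ifs with hik
  · have hsub : Finset.Ico (i : ℕ) ((i : ℕ) + m + 1) ⊆ range (m + k) := by
      intro x hx; simp only [Finset.mem_Ico, Finset.mem_range] at *; omega
    rw [← Finset.sum_subset hsub (by
      intro x hx hx'
      simp only [Finset.mem_range, Finset.mem_Ico, not_and, not_lt] at hx hx'
      have : sylE m k a b (i : ℕ) x = 0 := by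
        unfold sylE
        rw [if_pos hik, if_neg (by omega)]
      rw [this, zero_mul])]
    rw [show (i : ℕ) + m + 1 = (i : ℕ) + (m + 1) by omega, Finset.sum_Ico_eq_sum_range]
    simp only [add_tsub_cancel_left]
    rw [Finset.mul_sum]
    refine Finset.sum_congr rfl ?_
    intro u hu
    simp only [Finset.mem_range] at hu
    have : sylE m k a b (i : ℕ) ((i : ℕ) + u) = a u := by
      unfold sylE
      rw [if_pos hik, if_pos (by omega), add_tsub_cancel_left]
    rw [this, pow_add]
    ring
  · set t := (i : ℕ) - k with ht
    have htm : t < m := by omega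
    have hsub : Finset.Ico t (t + k + 1) ⊆ range (m + k) := by
      intro x hx; simp only [Finset.mem_Ico, Finset.mem_range] at *; omega
    rw [← Finset.sum_subset hsub (by
      intro x hx hx'
      simp only [Finset.mem_range, Finset.mem_Ico, not_and, not_lt] at hx hx'
      have : sylE m k a b (i : ℕ) x = 0 := by
        unfold sylE
        rw [if_neg hik, if_neg (by omega)]
      rw [this, zero_mul])]
    rw [show t + k + 1 = t + (k + 1) by omega, Finset.sum_Ico_eq_sum_range]
    simp only [add_tsub_cancel_left]
    rw [Finset.mul_sum]
    refine Finset.sum_congr rfl ?_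
    intro u hu
    simp only [Finset.mem_range] at hu
    have : sylE m k a b (i : ℕ) (t + u) = b u := by
      unfold sylE
      rw [if_neg hik, if_pos (by omega), add_tsub_cancel_left]
    rw [this, pow_add]
    ring

end Syl

section SylField
variable {F : Type*} [Field F]

lemma sylM_det_eq_zero (m k : ℕ) (a b : ℕ → F) (hmk : 0 < m + k) (z : F)
    (hP : ∑ u ∈ range (m + 1), a u * z ^ u = 0)
    (hQ : ∑ u ∈ range (k + 1), b u * z ^ u = 0) :
    (sylM m k a b).det = 0 := by
  rw [← Matrix.exists_mulVec_eq_zero_iff]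
  refine ⟨fun j => z ^ (j : ℕ), ?_, ?_⟩
  · intro h0
    have := congrFun h0 ⟨0, hmk⟩
    simp at this
  · funext i
    rw [sylM_mulVec]
    split_ifs <;> simp [hP, hQ]

lemma coeff_sumC (c : ℕ → F) (n j : ℕ) :
    (∑ i ∈ range n, Polynomial.C (c i) * Polynomial.X ^ i).coeff j
      = if j < n then c j else 0 := by
  rw [Polynomial.finset_sum_coeff]
  simp only [Polynomial.coeff_C_mul, Polynomial.coeff_X_pow, mul_ite, mul_one, mul_zero]
  rw [Finset.sum_ite_eq (range n) j c]
  simp [Finset.mem_range]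

lemma coeff_term_mul (P : F[X]) (c : F) (i j : ℕ) :
    (Polynomial.C c * Polynomial.X ^ i * P).coeff j
      = if i ≤ j then c * P.coeff (j - i) else 0 := by
  rw [show Polynomial.C c * Polynomial.X ^ i * P = Polynomial.C c * P * Polynomial.X ^ i by ring]
  rw [Polynomial.coeff_mul_X_pow', Polynomial.coeff_C_mul]

lemma degree_sumC_lt (c : ℕ → F) (n : ℕ) (hn : 0 < n) :
    (∑ i ∈ range n, Polynomial.C (c i) * Polynomial.X ^ i).degree < (n : WithBot ℕ) := by
  rw [Polynomial.degree_lt_iff_coeff_zero]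
  intro j hj
  rw [coeff_sumC]
  rw [if_neg (by exact_mod_cast not_lt.mpr (by exact_mod_cast hj))]

lemma degree_sumC_eq (c : ℕ → F) (n : ℕ) (hc : c n ≠ 0) :
    (∑ i ∈ range (n + 1), Polynomial.C (c i) * Polynomial.X ^ i).degree = (n : WithBot ℕ) := by
  apply le_antisymm
  · rw [Polynomial.degree_le_iff_coeff_zero]
    intro j hj
    have hj' : n < j := by exact_mod_cast hj
    rw [coeff_sumC, if_neg (by omega)]
  · apply Polynomial.le_degree_of_ne_zero
    rw [coeff_sumC, if_pos (Nat.lt_succ_self n)]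
    exact hc

lemma sylM_det_ne_zero (m k : ℕ) (hk : 0 < k) (a b : ℕ → F) (hbk : b k ≠ 0)
    (hcop : IsCoprime (∑ u ∈ range (m + 1), Polynomial.C (a u) * Polynomial.X ^ u)
      (∑ u ∈ range (k + 1), Polynomial.C (b u) * Polynomial.X ^ u)) :
    (sylM m k a b).det ≠ 0 := by
  intro hdet
  obtain ⟨w, hw0, hw⟩ := Matrix.exists_vecMul_eq_zero_iff.mpr hdet
  set P : F[X] := ∑ u ∈ range (m + 1), Polynomial.C (a u) * Polynomial.X ^ u with hPdef
  set Q : F[X] := ∑ u ∈ range (k + 1), Polynomial.C (b u) * Polynomial.X ^ u with hQdef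
  set w' : ℕ → F := fun i => if h : i < m + k then w ⟨i, h⟩ else 0 with hw'def
  set A : F[X] := ∑ i ∈ range k, Polynomial.C (w' i) * Polynomial.X ^ i with hAdef
  set B : F[X] := ∑ t ∈ range m, Polynomial.C (w' (k + t)) * Polynomial.X ^ t with hBdef
  have hPcoeff : ∀ j, P.coeff j = if j < m + 1 then a j else 0 := fun j => coeff_sumC a (m+1) j
  have hQcoeff : ∀ j, Q.coeff j = if j < k + 1 then b j else 0 := fun j => coeff_sumC b (k+1) j
  have hQne : Q ≠ 0 := fun h0 => by
    have := hQcoeff k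
    rw [h0, Polynomial.coeff_zero, if_pos (Nat.lt_succ_self k)] at this
    exact hbk this.symm
  -- coefficient identity
  have key : ∀ j, (A * P + B * Q).coeff j = ∑ i ∈ range (m + k), w' i * sylE m k a b i j := by
    intro j
    have hAP : (A * P).coeff j = ∑ i ∈ range k, w' i * sylE m k a b i j := by
      rw [hAdef, Finset.sum_mul, Polynomial.finset_sum_coeff]
      refine Finset.sum_congr rfl ?_
      intro i hi
      simp only [Finset.mem_range] at hi
      rw [coeff_term_mul, hPcoeff]
      unfold sylE
      rw [if_pos hi]
      by_cases h1 : i ≤ j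
      · by_cases h2 : j ≤ i + m
        · rw [if_pos h1, if_pos (show j - i < m + 1 by omega), if_pos ⟨h1, h2⟩]
        · rw [if_pos h1, if_neg (show ¬(j - i < m + 1) by omega),
            if_neg (fun hc => h2 hc.2), mul_zero]
      · rw [if_neg h1, if_neg (fun hc => h1 hc.1), mul_zero]
    have hBQ : (B * Q).coeff j = ∑ t ∈ range m, w' (k + t) * sylE m k a b (k + t) j := by
      rw [hBdef, Finset.sum_mul, Polynomial.finset_sum_coeff]
      refine Finset.sum_congr rfl ?_
      intro t ht
      simp only [Finset.mem_range] at ht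
      rw [coeff_term_mul, hQcoeff]
      unfold sylE
      rw [if_neg (show ¬(k + t < k) by omega)]
      have h1 : k + t - k = t := by omega
      rw [h1]
      by_cases h2 : t ≤ j
      · by_cases h3 : j ≤ t + k
        · rw [if_pos h2, if_pos (show j - t < k + 1 by omega), if_pos ⟨h2, h3⟩]
        · rw [if_pos h2, if_neg (show ¬(j - t < k + 1) by omega),
            if_neg (fun hc => h3 hc.2), mul_zero]
      · rw [if_neg h2, if_neg (fun hc => h2 hc.1), mul_zero]
    rw [Polynomial.coeff_add, hAP, hBQ]
    have hsplit : ∑ i ∈ range (m + k), w' i * sylE m k a b i j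
        = (∑ i ∈ Finset.Ico 0 k, w' i * sylE m k a b i j)
          + ∑ i ∈ Finset.Ico k (m + k), w' i * sylE m k a b i j := by
      rw [Finset.sum_Ico_consecutive _ (by omega) (by omega), ← Finset.range_eq_Ico]
    rw [hsplit, ← Finset.range_eq_Ico, Finset.sum_Ico_eq_sum_range]
    simp only [add_tsub_cancel_right]
  -- the polynomial combination vanishes
  have hzero : A * P + B * Q = 0 := by
    ext j
    rw [key, Polynomial.coeff_zero]
    by_cases hj : j < m + k
    · have hv := congrFun hw ⟨j, hj⟩
      rw [Matrix.vecMul, dotProduct, Pi.zero_apply] at hv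
      rw [← hv, ← Fin.sum_univ_eq_sum_range (fun i => w' i * sylE m k a b i j)]
      refine Finset.sum_congr rfl ?_
      intro i _
      have h1 : w' (i : ℕ) = w i := by
        rw [hw'def]
        simp [i.isLt]
      rw [h1, sylM_apply]
    · refine Finset.sum_eq_zero ?_
      intro i hi
      simp only [Finset.mem_range] at hi
      rw [sylE_eq_zero_of_ge m k a b hi (by omega), mul_zero]
  -- coprimality forces A = 0 and B = 0
  have hQdvd : Q ∣ A * P := ⟨-B, by linear_combination hzero⟩
  have hQdvdA : Q ∣ A := hcop.symm.dvd_of_dvd_mul_right hQdvd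
  have hA0 : A = 0 := Polynomial.eq_zero_of_dvd_of_degree_lt hQdvdA (by
    rw [hQdef, degree_sumC_eq b k hbk]
    exact degree_sumC_lt w' k hk)
  have hB0 : B = 0 := by
    have : B * Q = 0 := by
      rw [hA0, zero_mul, zero_add] at hzero
      exact hzero
    rcases mul_eq_zero.mp this with h | h
    · exact h
    · exact absurd h hQne
  apply hw0
  funext i
  have hwi : w i = w' (i : ℕ) := by rw [hw'def]; simp [i.isLt]
  by_cases hik : (i : ℕ) < k
  · have := coeff_sumC w' k (i : ℕ)
    rw [← hAdef, hA0, Polynomial.coeff_zero, if_pos hik] at this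
    rw [Pi.zero_apply, hwi, this]
  · set t := (i : ℕ) - k with htdef
    have htm : t < m := by have := i.isLt; omega
    have := coeff_sumC (fun t => w' (k + t)) m t
    rw [← hBdef, hB0, Polynomial.coeff_zero, if_pos htm] at this
    rw [Pi.zero_apply, hwi, show (i : ℕ) = k + t by omega, this]

end SylField

open Finset MeasureTheory MvPolynomial

section Glue

lemma sylM_map {R S : Type*} [CommRing R] [CommRing S] (f : R →+* S)
    (m k : ℕ) (a b : ℕ → R) :
    (sylM m k a b).map f = sylM m k (fun u => f (a u)) (fun u => f (b u)) := by
  ext i j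
  simp only [Matrix.map_apply, sylM_apply]
  unfold sylE
  split_ifs <;> simp

lemma aeval_sumC (c : ℕ → ℂ) (n : ℕ) (z : ℂ) :
    Polynomial.aeval z (∑ u ∈ range n, Polynomial.C (c u) * Polynomial.X ^ u)
      = ∑ u ∈ range n, c u * z ^ u := by
  rw [map_sum]
  refine Finset.sum_congr rfl fun u _ => ?_
  simp

end Glue

/-- Let `p 0, …, p m` and `q 0, …, q k` be polynomial functions on
`ℝ^d`, and for `θ ∈ ℝ^d` set `P_θ(λ) = Σ_{u=0}^m p u (θ) λ^u` and
`Q_θ(λ) = Σ_{u=0}^k q u (θ) λ^u`.  If for some `θ₀` both leading coefficients are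
nonzero and `P_{θ₀}`, `Q_{θ₀}` have no common complex root, then the set of `θ` with
nonzero leading coefficients for which `P_θ` and `Q_θ` have a common complex root has
Lebesgue measure zero. -/
theorem stmt5 (d m k : ℕ) (p q : ℕ → MvPolynomial (Fin d) ℝ)
    (θ₀ : Fin d → ℝ) (hp₀ : eval θ₀ (p m) ≠ 0) (hq₀ : eval θ₀ (q k) ≠ 0)
    (hnocommon : ¬ ∃ z : ℂ,
      (∑ u ∈ range (m + 1), (eval θ₀ (p u) : ℂ) * z ^ u = 0) ∧
      (∑ u ∈ range (k + 1), (eval θ₀ (q u) : ℂ) * z ^ u = 0)) :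
    volume {θ : Fin d → ℝ | eval θ (p m) ≠ 0 ∧ eval θ (q k) ≠ 0 ∧
      ∃ z : ℂ, (∑ u ∈ range (m + 1), (eval θ (p u) : ℂ) * z ^ u = 0) ∧
        (∑ u ∈ range (k + 1), (eval θ (q u) : ℂ) * z ^ u = 0)} = 0 := by
  rcases Nat.eq_zero_or_pos m with hm | hm
  · subst hm
    have hempty : {θ : Fin d → ℝ | eval θ (p 0) ≠ 0 ∧ eval θ (q k) ≠ 0 ∧
        ∃ z : ℂ, (∑ u ∈ range (0 + 1), (eval θ (p u) : ℂ) * z ^ u = 0) ∧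
          (∑ u ∈ range (k + 1), (eval θ (q u) : ℂ) * z ^ u = 0)} = ∅ := by
      ext θ
      simp only [Set.mem_setOf_eq, Set.mem_empty_iff_false, iff_false, not_and]
      rintro h1 h2 ⟨z, hz1, _⟩
      rw [zero_add, Finset.sum_range_one, pow_zero, mul_one] at hz1
      exact h1 (by exact_mod_cast hz1)
    rw [hempty, measure_empty]
  rcases Nat.eq_zero_or_pos k with hk | hk
  · subst hk
    have hempty : {θ : Fin d → ℝ | eval θ (p m) ≠ 0 ∧ eval θ (q 0) ≠ 0 ∧
        ∃ z : ℂ, (∑ u ∈ range (m + 1), (eval θ (p u) : ℂ) * z ^ u = 0) ∧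
          (∑ u ∈ range (0 + 1), (eval θ (q u) : ℂ) * z ^ u = 0)} = ∅ := by
      ext θ
      simp only [Set.mem_setOf_eq, Set.mem_empty_iff_false, iff_false, not_and]
      rintro h1 h2 ⟨z, _, hz2⟩
      rw [zero_add, Finset.sum_range_one, pow_zero, mul_one] at hz2
      exact h2 (by exact_mod_cast hz2)
    rw [hempty, measure_empty]
  -- main case
  set Fp : MvPolynomial (Fin d) ℝ := (sylM m k p q).det with hFdef
  have hevalF : ∀ θ : Fin d → ℝ, ((eval θ Fp : ℝ) : ℂ)
      = (sylM m k (fun u => ((eval θ (p u) : ℝ) : ℂ))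
          (fun u => ((eval θ (q u) : ℝ) : ℂ))).det := by
    intro θ
    have h1 : ((eval θ Fp : ℝ) : ℂ)
        = (Complex.ofRealHom.comp (eval θ : MvPolynomial (Fin d) ℝ →+* ℝ)) Fp := rfl
    rw [h1, hFdef, RingHom.map_det, RingHom.mapMatrix_apply, sylM_map]
    rfl
  have hθ₀ : eval θ₀ Fp ≠ 0 := by
    intro h0
    have hdet0 : (sylM m k (fun u => ((eval θ₀ (p u) : ℝ) : ℂ))
        (fun u => ((eval θ₀ (q u) : ℝ) : ℂ))).det = 0 := by
      rw [← hevalF θ₀, h0, Complex.ofReal_zero]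
    refine sylM_det_ne_zero m k hk _ _ ?_ ?_ hdet0
    · exact_mod_cast hq₀
    · refine (Polynomial.isCoprime_iff_aeval_ne_zero_of_isAlgClosed ℂ ℂ _ _).mpr fun z => ?_
      have hz := hnocommon
      rw [not_exists] at hz
      have := not_and_or.mp (hz z)
      rwa [aeval_sumC, aeval_sumC]
  refine measure_mono_null ?_
    (nullOfPolyZero d Fp (fun h0 => hθ₀ (by rw [h0, map_zero])))
  rintro θ ⟨-, -, z, hz1, hz2⟩
  simp only [Set.mem_setOf_eq]
  have hdet0 : (sylM m k (fun u => ((eval θ (p u) : ℝ) : ℂ))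
      (fun u => ((eval θ (q u) : ℝ) : ℂ))).det = 0 :=
    sylM_det_eq_zero m k _ _ (by omega) z hz1 hz2
  have := hevalF θ
  rw [hdet0] at this
  exact_mod_cast this
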